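/- For finite groups A and B, ρ(A × B) divides ρ(A)^{|B|} · ρ(B)^{|A|}. Moreover, ρ(A × B) = ρ(A)^{|B|} · ρ(B)^{|A|} if and only if gcd(|A|, |B|) = 1. -/
import Mathlib


noncomputable def rho (G : Type*) [Group G] : ℕ := ∏ᶠ x : G, orderOf x

noncomputable def OmegaRho (G : Type*) [Group G] : ℕ :=
  ArithmeticFunction.cardFactors (rho G)

theorem rho_prod_dvd (A B : Type*) [Group A] [Group B] [Finite A] [Finite B] :
    rho (A × B) ∣ rho A ^ Nat.card B * rho B ^ Nat.card A ∧
    (rho (A × B) = rho A ^ Nat.card B * rho B ^ Nat.card A ↔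
      Nat.gcd (Nat.card A) (Nat.card B) = 1) := by
  classical
  haveI : Fintype A := Fintype.ofFinite A
  haveI : Fintype B := Fintype.ofFinite B
  have hrhoAB : rho (A × B) = ∏ x : A × B, Nat.lcm (orderOf x.1) (orderOf x.2) := by
    rw [rho, finprod_eq_prod_of_fintype]
    exact Finset.prod_congr rfl fun x _ => Prod.orderOf x
  have hRHS : rho A ^ Nat.card B * rho B ^ Nat.card A
      = ∏ x : A × B, orderOf x.1 * orderOf x.2 := by
    rw [rho, rho, finprod_eq_prod_of_fintype, finprod_eq_prod_of_fintype,
      Fintype.prod_prod_type, Nat.card_eq_fintype_card, Nat.card_eq_fintype_card]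
    simp only [Finset.prod_mul_distrib, Finset.prod_const, Finset.prod_pow, Finset.card_univ]
  have hdvd : ∀ x : A × B, Nat.lcm (orderOf x.1) (orderOf x.2) ∣ orderOf x.1 * orderOf x.2 :=
    fun x => Nat.lcm_dvd_mul _ _
  constructor
  · rw [hrhoAB, hRHS]
    exact Finset.prod_dvd_prod_of_dvd _ _ fun x _ => hdvd x
  · rw [hrhoAB, hRHS]
    -- ∏ lcm * ∏ gcd = ∏ (a*b)
    have key : (∏ x : A × B, Nat.lcm (orderOf x.1) (orderOf x.2)) *
        (∏ x : A × B, Nat.gcd (orderOf x.1) (orderOf x.2))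
        = ∏ x : A × B, orderOf x.1 * orderOf x.2 := by
      rw [← Finset.prod_mul_distrib]
      exact Finset.prod_congr rfl fun x _ => Nat.gcd_mul_lcm (orderOf x.1) (orderOf x.2) ▸
        (Nat.mul_comm _ _)
    have hpos : 0 < ∏ x : A × B, Nat.lcm (orderOf x.1) (orderOf x.2) :=
      Finset.prod_pos fun x _ => Nat.lcm_pos (orderOf_pos x.1) (orderOf_pos x.2)
    constructor
    · intro h
      have hg1 : (∏ x : A × B, Nat.gcd (orderOf x.1) (orderOf x.2)) = 1 := by
        have hk : (∏ x : A × B, Nat.lcm (orderOf x.1) (orderOf x.2)) *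
            (∏ x : A × B, Nat.gcd (orderOf x.1) (orderOf x.2))
            = (∏ x : A × B, Nat.lcm (orderOf x.1) (orderOf x.2)) * 1 := by
          rw [mul_one]; exact key.trans h.symm
        exact Nat.eq_of_mul_eq_mul_left hpos hk
      have hall : ∀ x : A × B, Nat.gcd (orderOf x.1) (orderOf x.2) = 1 := by
        intro x
        have : ∀ y ∈ (Finset.univ : Finset (A × B)),
            Nat.gcd (orderOf y.1) (orderOf y.2) = 1 := by
          intro y _
          by_contra hne
          have h2 : 2 ≤ Nat.gcd (orderOf y.1) (orderOf y.2) := by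
            have hp : 0 < Nat.gcd (orderOf y.1) (orderOf y.2) :=
              Nat.gcd_pos_of_pos_left _ (orderOf_pos y.1)
            omega
          have : Nat.gcd (orderOf y.1) (orderOf y.2) ∣
              ∏ x : A × B, Nat.gcd (orderOf x.1) (orderOf x.2) :=
            Finset.dvd_prod_of_mem _ (Finset.mem_univ y)
          rw [hg1] at this
          exact hne (Nat.eq_one_of_dvd_one this)
        exact this x (Finset.mem_univ x)
      by_contra hne
      obtain ⟨p, hp, hpd⟩ := Nat.exists_prime_and_dvd hne
      haveI : Fact p.Prime := ⟨hp⟩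
      rw [Nat.card_eq_fintype_card, Nat.card_eq_fintype_card] at *
      have hpA' : p ∣ Fintype.card A := hpd.trans (Nat.gcd_dvd_left _ _)
      have hpB' : p ∣ Fintype.card B := hpd.trans (Nat.gcd_dvd_right _ _)
      obtain ⟨a, ha⟩ := exists_prime_orderOf_dvd_card p hpA'
      obtain ⟨b, hb⟩ := exists_prime_orderOf_dvd_card p hpB'
      have := hall (a, b)
      simp [ha, hb, Nat.gcd_self] at this
      exact hp.one_lt.ne' this
    · intro h
      refine Finset.prod_congr rfl fun x _ => ?_
      have hcop : Nat.Coprime (orderOf x.1) (orderOf x.2) := by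
        have h1 : orderOf x.1 ∣ Nat.card A := orderOf_dvd_natCard x.1
        have h2 : orderOf x.2 ∣ Nat.card B := orderOf_dvd_natCard x.2
        exact Nat.Coprime.coprime_dvd_right h2
          (Nat.Coprime.coprime_dvd_left h1 h)
      rw [Nat.Coprime.lcm_eq_mul hcop]
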